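/- Let G=(A,B,E) be a bipartite graph with |A| ≥ 2 and |B| ≥ 2 such that C1(G) = 0, C2(G) = 1, and C3(G) = 0, i.e., every connected component of G is an isolated edge or a block, exactly one component is an isolated edge, and no component is a nonsingular block. Then B(G) = 3. -/

import Mathlib

open SimpleGraph

namespace AugBic

noncomputable section

variable {V : Type*}

/-- Two vertices are biconnected: they are in the same connected component and remain so
after the removal of any single edge or any single vertex other than either of them. -/
def BiconnPair (G : SimpleGraph V) (u v : V) : Prop :=
  G.Reachable u v ∧
  (∀ e ∈ G.edgeSet, (G.deleteEdges {e}).Reachable u v) ∧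
  (∀ w : V, ∀ hu : u ≠ w, ∀ hv : v ≠ w,
    (G.induce {x | x ≠ w}).Reachable ⟨u, hu⟩ ⟨v, hv⟩)

/-- A set of vertices is biconnected if every pair of its vertices is biconnected. -/
def BiconnSet (G : SimpleGraph V) (S : Set V) : Prop :=
  ∀ u ∈ S, ∀ v ∈ S, BiconnPair G u v

/-- A block: (the induced subgraph on) a maximal biconnected set of vertices. -/
def IsBlock (G : SimpleGraph V) (S : Set V) : Prop :=
  S.Nonempty ∧ BiconnSet G S ∧ ∀ T : Set V, S ⊆ T → BiconnSet G T → T = S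

/-- A cut vertex: its removal increases the number of connected components. -/
def IsCutVertex (G : SimpleGraph V) (v : V) : Prop :=
  Nat.card G.ConnectedComponent <
    Nat.card ((G.induce {x | x ≠ v}).ConnectedComponent)

/-- A cut edge: its removal increases the number of connected components. -/
def IsCutEdge (G : SimpleGraph V) (e : Sym2 V) : Prop :=
  e ∈ G.edgeSet ∧
    Nat.card G.ConnectedComponent <
      Nat.card ((G.deleteEdges {e}).ConnectedComponent)

/-- A pendant block: a singular block consisting of a vertex of degree 1, or a
nonsingular block containing exactly one cut vertex. -/
def IsPendantBlock (G : SimpleGraph V) (S : Set V) : Prop :=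
  IsBlock G S ∧
    ((∃ v, S = {v} ∧ (G.neighborSet v).ncard = 1) ∨
     (1 < S.ncard ∧ ∃! v, v ∈ S ∧ IsCutVertex G v))

/-- Λ(G): the set of pendant blocks of `G`. -/
def pendantBlocks (G : SimpleGraph V) : Set (Set V) :=
  {S | IsPendantBlock G S}

/-- A block is of type `P` (for `P = A` or `P = B`) if all its noncut vertices lie in `P`. -/
def TypeOnly (G : SimpleGraph V) (P : Set V) (S : Set V) : Prop :=
  ∀ v ∈ S, ¬IsCutVertex G v → v ∈ P

/-- A block is type AB if it has a noncut vertex in `A` and a noncut vertex in `B`. -/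
def TypeAB (G : SimpleGraph V) (A B : Set V) (S : Set V) : Prop :=
  (∃ v ∈ S, ¬IsCutVertex G v ∧ v ∈ A) ∧ (∃ v ∈ S, ¬IsCutVertex G v ∧ v ∈ B)

/-- A legal pair: two distinct pendant blocks, not both of type A and not both of type B. -/
def LegalPair (G : SimpleGraph V) (A B : Set V) (S T : Set V) : Prop :=
  IsPendantBlock G S ∧ IsPendantBlock G T ∧ S ≠ T ∧
  ¬(TypeOnly G A S ∧ TypeOnly G A T) ∧ ¬(TypeOnly G B S ∧ TypeOnly G B T)

/-- A legal edge: a vertex pair in `A × B` that is not an edge of `G`. -/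
def LegalEdge (G : SimpleGraph V) (A B : Set V) (a b : V) : Prop :=
  a ∈ A ∧ b ∈ B ∧ ¬G.Adj a b

/-- A binding edge for a legal pair: a legal edge joining two noncut vertices,
one from each block of the pair. -/
def BindingEdge (G : SimpleGraph V) (A B : Set V) (S T : Set V) (a b : V) : Prop :=
  LegalEdge G A B a b ∧
  ((a ∈ S ∧ ¬IsCutVertex G a ∧ b ∈ T ∧ ¬IsCutVertex G b) ∨
   (a ∈ T ∧ ¬IsCutVertex G a ∧ b ∈ S ∧ ¬IsCutVertex G b))

/-- A legal matching of a set `Λ'` of pendant blocks: a set of legal pairs between elements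
of `Λ'` such that each element of `Λ'` belongs to at most one pair. -/
def IsLegalMatching (G : SimpleGraph V) (A B : Set V) (Λ' : Set (Set V))
    (N : Set (Set V × Set V)) : Prop :=
  (∀ q ∈ N, q.1 ∈ Λ' ∧ q.2 ∈ Λ' ∧ LegalPair G A B q.1 q.2) ∧
  (∀ q ∈ N, ∀ q' ∈ N, q ≠ q' →
    ({q.1, q.2} ∩ {q'.1, q'.2} : Set (Set V)) = ∅)

/-- M(Λ'): the maximum cardinality of a legal matching of `Λ'`. -/
def maxMatching (G : SimpleGraph V) (A B : Set V) (Λ' : Set (Set V)) : ℕ :=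
  sSup {k | ∃ N, IsLegalMatching G A B Λ' N ∧ N.ncard = k}

/-- R(Λ') = |Λ'| − 2·M(Λ'). -/
def Rnum (G : SimpleGraph V) (A B : Set V) (Λ' : Set (Set V)) : ℕ :=
  Λ'.ncard - 2 * maxMatching G A B Λ'

/-- A graph is componentwise biconnected if every connected component is a block. -/
def ComponentwiseBiconnected (G : SimpleGraph V) : Prop :=
  ∀ c : G.ConnectedComponent, IsBlock G c.supp

/-- D(G,u): the number of connected components of X − {u}, where X is the
connected component of G containing u. -/
def Dnum (G : SimpleGraph V) (u : V) : ℕ :=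
  Nat.card ((G.induce {v | G.Reachable u v ∧ v ≠ u}).ConnectedComponent)

/-- C(G): the number of connected components of G that are not blocks. -/
def Cnum (G : SimpleGraph V) : ℕ :=
  Nat.card {c : G.ConnectedComponent // ¬IsBlock G c.supp}

/-- η(G) = max{ max_u D(G,u) + C(G) − 2, M(Λ(G)) + R(Λ(G)) }. -/
def eta (G : SimpleGraph V) (A B : Set V) : ℕ :=
  max ((⨆ u : V, Dnum G u) + Cnum G - 2)
      (maxMatching G A B (pendantBlocks G) + Rnum G A B (pendantBlocks G))

/-- A biconnector: a set of legal edges whose addition makes `G` componentwise biconnected. -/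
def IsBiconnector (G : SimpleGraph V) (A B : Set V) (L : Set (Sym2 V)) : Prop :=
  (∀ e ∈ L, ∃ a b : V, e = s(a, b) ∧ LegalEdge G A B a b) ∧
  ComponentwiseBiconnected (G ⊔ SimpleGraph.fromEdgeSet L)

/-- B(G): the minimum number of edges of a biconnector of `G`. -/
def Bnum (G : SimpleGraph V) (A B : Set V) : ℕ :=
  sInf {k | ∃ L, IsBiconnector G A B L ∧ L.ncard = k}

/-- A connected component is an isolated edge. -/
def IsIsolatedEdgeComp (G : SimpleGraph V) (c : G.ConnectedComponent) : Prop :=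
  ∃ u v : V, G.Adj u v ∧ c.supp = {u, v}

/-- C1(G): the number of components that are neither isolated edges nor blocks. -/
def C1num (G : SimpleGraph V) : ℕ :=
  Nat.card {c : G.ConnectedComponent // ¬IsIsolatedEdgeComp G c ∧ ¬IsBlock G c.supp}

/-- C2(G): the number of isolated-edge components. -/
def C2num (G : SimpleGraph V) : ℕ :=
  Nat.card {c : G.ConnectedComponent // IsIsolatedEdgeComp G c}

/-- C3(G): the number of components that are nonsingular blocks. -/
def C3num (G : SimpleGraph V) : ℕ :=
  Nat.card {c : G.ConnectedComponent // IsBlock G c.supp ∧ 1 < c.supp.ncard}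

/-- A cut vertex `u` is critical if D(G,u) − 1 = M(Λ(G)) + R(Λ(G)). -/
def Critical (G : SimpleGraph V) (A B : Set V) (u : V) : Prop :=
  IsCutVertex G u ∧
    Dnum G u - 1 = maxMatching G A B (pendantBlocks G) + Rnum G A B (pendantBlocks G)

/-- A cut vertex `u` is massive if D(G,u) − 1 > M(Λ(G)) + R(Λ(G)). -/
def Massive (G : SimpleGraph V) (A B : Set V) (u : V) : Prop :=
  IsCutVertex G u ∧
    maxMatching G A B (pendantBlocks G) + Rnum G A B (pendantBlocks G) < Dnum G u - 1

/-- Vertices of the block tree: blocks (b-vertices), cut vertices and cut edges (c-vertices). -/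
inductive BTV (V : Type*) where
  | blk : Set V → BTV V
  | cv : V → BTV V
  | ce : Sym2 V → BTV V

/-- Valid vertices of the block tree of `G`: nonsingular blocks and singular pendant blocks
(b-vertices), together with cut vertices and cut edges (c-vertices). -/
def IsBTVert (G : SimpleGraph V) : BTV V → Prop
  | .blk S => IsBlock G S ∧ (1 < S.ncard ∨ ∃ v, S = {v} ∧ (G.neighborSet v).ncard = 1)
  | .cv v => IsCutVertex G v
  | .ce e => IsCutEdge G e

/-- Adjacency of the block tree: a nonsingular block is joined to each cut vertex in it,
a cut vertex to each cut edge incident to it, and a cut edge to each singular (pendant)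
block containing one of its endpoints. -/
def btAdj (G : SimpleGraph V) : BTV V → BTV V → Prop
  | .blk _, .blk _ => False
  | .blk S, .cv c => 1 < S.ncard ∧ c ∈ S
  | .blk S, .ce e => ∃ v, S = {v} ∧ v ∈ e
  | .cv c, .blk S => 1 < S.ncard ∧ c ∈ S
  | .cv _, .cv _ => False
  | .cv c, .ce e => c ∈ e
  | .ce e, .blk S => ∃ v, S = {v} ∧ v ∈ e
  | .ce e, .cv c => c ∈ e
  | .ce _, .ce _ => False

/-- The vertex type of the block tree Ψ(G). -/
abbrev BTVert (G : SimpleGraph V) := {x : BTV V // IsBTVert G x}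

/-- The block tree Ψ(G). -/
def blockTree (G : SimpleGraph V) : SimpleGraph (BTVert G) where
  Adj x y := btAdj G x.1 y.1
  symm := by
    refine ⟨?_⟩
    rintro ⟨x, hx⟩ ⟨y, hy⟩ h
    cases x <;> cases y <;> simp_all [btAdj]
  loopless := by
    refine ⟨?_⟩
    rintro ⟨x, hx⟩ h
    cases x <;> simp_all [btAdj]

/-- Degree of a vertex of the block tree. -/
def btDeg (G : SimpleGraph V) (x : BTVert G) : ℕ :=
  Nat.card ((blockTree G).neighborSet x)

/-- A path is branchless if all its internal vertices have degree two. -/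
def Branchless {W : Type*} (T : SimpleGraph W) {x y : W} (p : T.Walk x y) : Prop :=
  p.IsPath ∧ ∀ z ∈ p.support, z ≠ x → z ≠ y → Nat.card (T.neighborSet z) = 2

/-- A leaf clings to a vertex `v` if there is a branchless path between it and `v`. -/
def Clings {W : Type*} (T : SimpleGraph W) (l v : W) : Prop :=
  ∃ p : T.Walk l v, Branchless T p


private lemma walk_closed {H : SimpleGraph V} {S : Set V}
    (hS : ∀ ⦃x y⦄, H.Adj x y → x ∈ S → y ∈ S) :
    ∀ {u v : V}, H.Walk u v → u ∈ S → v ∈ S := by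
  intro u v p
  induction p with
  | nil => exact id
  | cons h' p ih => exact fun hu => ih (hS h' hu)

private lemma reach_closed {H : SimpleGraph V} {S : Set V}
    (hS : ∀ ⦃x y⦄, H.Adj x y → x ∈ S → y ∈ S) {u v : V}
    (h : H.Reachable u v) (hu : u ∈ S) : v ∈ S := by
  obtain ⟨p⟩ := h
  exact walk_closed hS p hu

theorem stmt_10 [Fintype V] (G : SimpleGraph V) (A B : Set V)
    (hdisj : Disjoint A B) (hcov : A ∪ B = Set.univ)
    (hbip : ∀ u v : V, G.Adj u v → (u ∈ A ∧ v ∈ B) ∨ (u ∈ B ∧ v ∈ A))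
    (hA : 2 ≤ A.ncard) (hB : 2 ≤ B.ncard)
    (hC1 : C1num G = 0) (hC2 : C2num G = 1) (hC3 : C3num G = 0) :
    Bnum G A B = 3 := by
  classical
  have hfinCC : Finite G.ConnectedComponent :=
    Finite.of_surjective G.connectedComponentMk fun c => c.exists_rep
  have hC1' : ∀ c : G.ConnectedComponent, IsIsolatedEdgeComp G c ∨ IsBlock G c.supp := by
    intro c
    by_contra hcon
    push_neg at hcon
    rcases Nat.card_eq_zero.mp hC1 with h' | h'
    · exact h'.false ⟨c, hcon.1, hcon.2⟩
    · exact absurd h' (not_infinite_iff_finite.mpr inferInstance)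
  have hC3' : ∀ c : G.ConnectedComponent, ¬(IsBlock G c.supp ∧ 1 < c.supp.ncard) := by
    intro c hcon
    rcases Nat.card_eq_zero.mp hC3 with h' | h'
    · exact h'.false ⟨c, hcon⟩
    · exact absurd h' (not_infinite_iff_finite.mpr inferInstance)
  obtain ⟨hsub2, ⟨⟨c₀, hc₀⟩⟩⟩ := Nat.card_eq_one_iff_unique.mp hC2
  obtain ⟨a0, b0, hadj0, hsupp0⟩ := id hc₀
  have huniq : ∀ c : G.ConnectedComponent, IsIsolatedEdgeComp G c → c = c₀ := by
    intro c hc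
    exact congrArg Subtype.val (@Subsingleton.elim _ hsub2 ⟨c, hc⟩ ⟨c₀, hc₀⟩)
  have honly : ∀ u v : V, G.Adj u v → s(u, v) = s(a0, b0) := by
    intro u v huv
    have hu : u ∈ (G.connectedComponentMk u).supp :=
      (ConnectedComponent.mem_supp_iff _ _).mpr rfl
    have hv : v ∈ (G.connectedComponentMk u).supp :=
      (ConnectedComponent.mem_supp_iff _ _).mpr (ConnectedComponent.sound huv.symm.reachable)
    rcases hC1' (G.connectedComponentMk u) with hiso | hb
    · have hceq := huniq _ hiso
      have hsupp : (G.connectedComponentMk u).supp = {a0, b0} := by rw [hceq, hsupp0]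
      rw [hsupp] at hu hv
      simp only [Set.mem_insert_iff, Set.mem_singleton_iff] at hu hv
      have hne := huv.ne
      rcases hu with rfl | rfl <;> rcases hv with rfl | rfl
      · exact absurd rfl hne
      · rfl
      · exact Sym2.eq_swap
      · exact absurd rfl hne
    · exact absurd ⟨hb, (Set.one_lt_ncard_iff (Set.toFinite _)).mpr ⟨u, v, hu, hv, huv.ne⟩⟩
        (hC3' _)
  obtain ⟨a, b, hab, haA, hbB, hE⟩ :
      ∃ a b : V, G.Adj a b ∧ a ∈ A ∧ b ∈ B ∧ G.edgeSet = {s(a, b)} := by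
    have hE0 : G.edgeSet = {s(a0, b0)} := by
      ext e
      refine Sym2.ind (fun x y => ?_) e
      simp only [mem_edgeSet, Set.mem_singleton_iff]
      constructor
      · exact honly x y
      · intro h
        rcases Sym2.eq_iff.mp h with ⟨rfl, rfl⟩ | ⟨rfl, rfl⟩
        · exact hadj0
        · exact hadj0.symm
    rcases hbip a0 b0 hadj0 with ⟨h1, h2⟩ | ⟨h1, h2⟩
    · exact ⟨a0, b0, hadj0, h1, h2, hE0⟩
    · exact ⟨b0, a0, hadj0.symm, h2, h1, hE0.trans (by rw [Sym2.eq_swap])⟩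
  have hanB : ∀ x, x ∈ A → x ∉ B := fun x hx => Set.disjoint_left.mp hdisj hx
  have nab : a ≠ b := hab.ne
  obtain ⟨a', ha'A, na'a⟩ : ∃ a', a' ∈ A ∧ a' ≠ a := by
    obtain ⟨x, y, hx, hy, hxy⟩ :=
      (Set.one_lt_ncard_iff (Set.toFinite _)).mp (show 1 < A.ncard by omega)
    by_cases h : x = a
    · subst h
      exact ⟨y, hy, fun h' => hxy h'.symm⟩
    · exact ⟨x, hx, h⟩
  obtain ⟨b', hb'B, nb'b⟩ : ∃ b', b' ∈ B ∧ b' ≠ b := by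
    obtain ⟨x, y, hx, hy, hxy⟩ :=
      (Set.one_lt_ncard_iff (Set.toFinite _)).mp (show 1 < B.ncard by omega)
    by_cases h : x = b
    · subst h
      exact ⟨y, hy, fun h' => hxy h'.symm⟩
    · exact ⟨x, hx, h⟩
  have naa' : a ≠ a' := na'a.symm
  have nab' : a ≠ b' := fun h => hanB a haA (h ▸ hb'B)
  have nb'a : b' ≠ a := nab'.symm
  have na'b : a' ≠ b := fun h => hanB a' ha'A (h ▸ hbB)
  have nba' : b ≠ a' := na'b.symm
  have na'b' : a' ≠ b' := fun h => hanB a' ha'A (h ▸ hb'B)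
  have nb'a' : b' ≠ a' := na'b'.symm
  have nba : b ≠ a := nab.symm
  have nbb' : b ≠ b' := nb'b.symm
  set L3 : Set (Sym2 V) := {s(b, a'), s(a', b'), s(b', a)} with hL3
  set ES : Set (Sym2 V) := insert s(a, b) L3 with hES
  set G' : SimpleGraph V := G ⊔ SimpleGraph.fromEdgeSet L3 with hG'
  set S4 : Set V := {a, b, a', b'} with hS4
  have m1 : s(a, b) ∈ ES := by rw [hES]; exact Set.mem_insert _ _
  have m2 : s(b, a') ∈ ES := by rw [hES, hL3]; simp
  have m3 : s(a', b') ∈ ES := by rw [hES, hL3]; simp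
  have m4 : s(b', a) ∈ ES := by rw [hES, hL3]; simp
  have hND : ∀ x y : V, s(x, y) ∈ ES → x ≠ y := by
    intro x y h
    rintro rfl
    rw [hES, hL3] at h
    simp only [Set.mem_insert_iff, Set.mem_singleton_iff, Sym2.eq_iff] at h
    rcases h with (⟨h1, h2⟩ | ⟨h1, h2⟩) | (⟨h1, h2⟩ | ⟨h1, h2⟩) | (⟨h1, h2⟩ | ⟨h1, h2⟩) |
      (⟨h1, h2⟩ | ⟨h1, h2⟩) <;>
      first
        | exact nab (h1.symm.trans h2)
        | exact nab (h2.symm.trans h1)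
        | exact nba' (h1.symm.trans h2)
        | exact nba' (h2.symm.trans h1)
        | exact na'b' (h1.symm.trans h2)
        | exact na'b' (h2.symm.trans h1)
        | exact nb'a (h1.symm.trans h2)
        | exact nb'a (h2.symm.trans h1)
  have hAdj : ∀ x y : V, G'.Adj x y ↔ s(x, y) ∈ ES := by
    intro x y
    rw [hG', sup_adj, fromEdgeSet_adj]
    constructor
    · rintro (h | ⟨h, -⟩)
      · have h' : s(x, y) ∈ G.edgeSet := G.mem_edgeSet.mpr h
        rw [hE, Set.mem_singleton_iff] at h'
        rw [hES]
        exact Set.mem_insert_iff.mpr (Or.inl h')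
      · rw [hES]
        exact Set.mem_insert_iff.mpr (Or.inr h)
    · intro h
      have hxy := hND x y h
      rw [hES] at h
      rcases Set.mem_insert_iff.mp h with h' | h'
      · exact Or.inl (G.mem_edgeSet.mp (by rw [hE]; exact Set.mem_singleton_iff.mpr h'))
      · exact Or.inr ⟨h', hxy⟩
  have hedge : G'.edgeSet = ES :=
    Set.ext fun e => Sym2.ind (fun x y => (G'.mem_edgeSet).trans (hAdj x y)) e
  have hend : ∀ ⦃x y : V⦄, G'.Adj x y → y ∈ S4 := by
    intro x y h
    rw [hAdj x y, hES, hL3] at h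
    simp only [Set.mem_insert_iff, Set.mem_singleton_iff, Sym2.eq_iff] at h
    rw [hS4]
    rcases h with (⟨-, rfl⟩ | ⟨-, rfl⟩) | (⟨-, rfl⟩ | ⟨-, rfl⟩) | (⟨-, rfl⟩ | ⟨-, rfl⟩) |
      (⟨-, rfl⟩ | ⟨-, rfl⟩) <;> simp
  have hadjES : ∀ x y : V, s(x, y) ∈ ES → G'.Adj x y := fun x y h => (hAdj x y).mpr h
  have hra : ∀ x ∈ S4, G'.Reachable x a := by
    intro x hx
    rw [hS4] at hx
    simp only [Set.mem_insert_iff, Set.mem_singleton_iff] at hx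
    rcases hx with rfl | rfl | rfl | rfl
    · exact Reachable.refl _
    · exact (hadjES x a (by rw [Sym2.eq_swap]; exact m1)).reachable
    · exact ((hadjES x b' m3).reachable).trans (hadjES b' a m4).reachable
    · exact (hadjES x a m4).reachable
  have hbs : BiconnSet G' S4 := by
    intro u hu w hw
    refine ⟨(hra u hu).trans (hra w hw).symm, ?_, ?_⟩
    · intro e he
      rw [hedge, hES, hL3] at he
      simp only [Set.mem_insert_iff, Set.mem_singleton_iff] at he
      have hD : ∀ x y : V, s(x, y) ∈ ES → s(x, y) ≠ e → (G'.deleteEdges {e}).Adj x y :=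
        fun x y h hne => SimpleGraph.deleteEdges_adj.mpr ⟨(hAdj x y).mpr h, by simpa using hne⟩
      rcases he with rfl | rfl | rfl | rfl
      · have hr : ∀ x ∈ S4, (G'.deleteEdges {s(a, b)}).Reachable x a := by
          intro x hx
          have d2 : (G'.deleteEdges {s(a, b)}).Adj b a' := hD b a' m2 (by simp [Sym2.eq_iff, nab, nba, naa', na'a, nab', nb'a, nba', na'b, nbb', nb'b, na'b', nb'a'])
          have d3 : (G'.deleteEdges {s(a, b)}).Adj a' b' := hD a' b' m3 (by simp [Sym2.eq_iff, nab, nba, naa', na'a, nab', nb'a, nba', na'b, nbb', nb'b, na'b', nb'a'])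
          have d4 : (G'.deleteEdges {s(a, b)}).Adj b' a := hD b' a m4 (by simp [Sym2.eq_iff, nab, nba, naa', na'a, nab', nb'a, nba', na'b, nbb', nb'b, na'b', nb'a'])
          rw [hS4] at hx
          simp only [Set.mem_insert_iff, Set.mem_singleton_iff] at hx
          rcases hx with rfl | rfl | rfl | rfl
          · exact Reachable.refl _
          · exact d2.reachable.trans (d3.reachable.trans d4.reachable)
          · exact d3.reachable.trans d4.reachable
          · exact d4.reachable
        exact (hr u hu).trans (hr w hw).symm
      · have hr : ∀ x ∈ S4, (G'.deleteEdges {s(b, a')}).Reachable x a := by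
          intro x hx
          have d1 : (G'.deleteEdges {s(b, a')}).Adj b a :=
            hD b a (by rw [Sym2.eq_swap]; exact m1) (by simp [Sym2.eq_iff, nab, nba, naa', na'a, nab', nb'a, nba', na'b, nbb', nb'b, na'b', nb'a'])
          have d3 : (G'.deleteEdges {s(b, a')}).Adj a' b' := hD a' b' m3 (by simp [Sym2.eq_iff, nab, nba, naa', na'a, nab', nb'a, nba', na'b, nbb', nb'b, na'b', nb'a'])
          have d4 : (G'.deleteEdges {s(b, a')}).Adj b' a := hD b' a m4 (by simp [Sym2.eq_iff, nab, nba, naa', na'a, nab', nb'a, nba', na'b, nbb', nb'b, na'b', nb'a'])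
          rw [hS4] at hx
          simp only [Set.mem_insert_iff, Set.mem_singleton_iff] at hx
          rcases hx with rfl | rfl | rfl | rfl
          · exact Reachable.refl _
          · exact d1.reachable
          · exact d3.reachable.trans d4.reachable
          · exact d4.reachable
        exact (hr u hu).trans (hr w hw).symm
      · have hr : ∀ x ∈ S4, (G'.deleteEdges {s(a', b')}).Reachable x a := by
          intro x hx
          have d1 : (G'.deleteEdges {s(a', b')}).Adj b a :=
            hD b a (by rw [Sym2.eq_swap]; exact m1) (by simp [Sym2.eq_iff, nab, nba, naa', na'a, nab', nb'a, nba', na'b, nbb', nb'b, na'b', nb'a'])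
          have d2 : (G'.deleteEdges {s(a', b')}).Adj a' b :=
            hD a' b (by rw [Sym2.eq_swap]; exact m2) (by simp [Sym2.eq_iff, nab, nba, naa', na'a, nab', nb'a, nba', na'b, nbb', nb'b, na'b', nb'a'])
          have d4 : (G'.deleteEdges {s(a', b')}).Adj b' a := hD b' a m4 (by simp [Sym2.eq_iff, nab, nba, naa', na'a, nab', nb'a, nba', na'b, nbb', nb'b, na'b', nb'a'])
          rw [hS4] at hx
          simp only [Set.mem_insert_iff, Set.mem_singleton_iff] at hx
          rcases hx with rfl | rfl | rfl | rfl
          · exact Reachable.refl _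
          · exact d1.reachable
          · exact d2.reachable.trans d1.reachable
          · exact d4.reachable
        exact (hr u hu).trans (hr w hw).symm
      · have hr : ∀ x ∈ S4, (G'.deleteEdges {s(b', a)}).Reachable x b := by
          intro x hx
          have d1 : (G'.deleteEdges {s(b', a)}).Adj a b := hD a b m1 (by simp [Sym2.eq_iff, nab, nba, naa', na'a, nab', nb'a, nba', na'b, nbb', nb'b, na'b', nb'a'])
          have d2 : (G'.deleteEdges {s(b', a)}).Adj a' b :=
            hD a' b (by rw [Sym2.eq_swap]; exact m2) (by simp [Sym2.eq_iff, nab, nba, naa', na'a, nab', nb'a, nba', na'b, nbb', nb'b, na'b', nb'a'])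
          have d3 : (G'.deleteEdges {s(b', a)}).Adj b' a' :=
            hD b' a' (by rw [Sym2.eq_swap]; exact m3) (by simp [Sym2.eq_iff, nab, nba, naa', na'a, nab', nb'a, nba', na'b, nbb', nb'b, na'b', nb'a'])
          rw [hS4] at hx
          simp only [Set.mem_insert_iff, Set.mem_singleton_iff] at hx
          rcases hx with rfl | rfl | rfl | rfl
          · exact d1.reachable
          · exact Reachable.refl _
          · exact d2.reachable
          · exact d3.reachable.trans d2.reachable
        exact (hr u hu).trans (hr w hw).symm
    · intro w0 hu0 hw0
      have hI : ∀ (x y : V) (hx : x ≠ w0) (hy : y ≠ w0), s(x, y) ∈ ES →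
          (G'.induce {z | z ≠ w0}).Adj ⟨x, hx⟩ ⟨y, hy⟩ :=
        fun x y hx hy h => SimpleGraph.comap_adj.mpr ((hAdj x y).mpr h)
      by_cases h1 : w0 = a
      · subst h1
        have hr : ∀ x (hxS : x ∈ S4) (hx : x ≠ w0),
            (G'.induce {z | z ≠ w0}).Reachable ⟨x, hx⟩ ⟨a', na'a⟩ := by
          intro x hxS hx
          rw [hS4] at hxS
          simp only [Set.mem_insert_iff, Set.mem_singleton_iff] at hxS
          rcases hxS with rfl | rfl | rfl | rfl
          · exact absurd rfl hx
          · exact (hI x a' hx na'a m2).reachable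
          · exact Reachable.refl _
          · exact (hI x a' hx na'a (by rw [Sym2.eq_swap]; exact m3)).reachable
        exact (hr u hu hu0).trans (hr w hw hw0).symm
      · by_cases h2 : w0 = b
        · subst h2
          have hr : ∀ x (hxS : x ∈ S4) (hx : x ≠ w0),
              (G'.induce {z | z ≠ w0}).Reachable ⟨x, hx⟩ ⟨b', nb'b⟩ := by
            intro x hxS hx
            rw [hS4] at hxS
            simp only [Set.mem_insert_iff, Set.mem_singleton_iff] at hxS
            rcases hxS with rfl | rfl | rfl | rfl
            · exact (hI x b' hx nb'b (by rw [Sym2.eq_swap]; exact m4)).reachable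
            · exact absurd rfl hx
            · exact (hI x b' hx nb'b m3).reachable
            · exact Reachable.refl _
          exact (hr u hu hu0).trans (hr w hw hw0).symm
        · by_cases h3 : w0 = a'
          · subst h3
            have hr : ∀ x (hxS : x ∈ S4) (hx : x ≠ w0),
                (G'.induce {z | z ≠ w0}).Reachable ⟨x, hx⟩ ⟨a, naa'⟩ := by
              intro x hxS hx
              rw [hS4] at hxS
              simp only [Set.mem_insert_iff, Set.mem_singleton_iff] at hxS
              rcases hxS with rfl | rfl | rfl | rfl
              · exact Reachable.refl _
              · exact (hI x a hx naa' (by rw [Sym2.eq_swap]; exact m1)).reachable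
              · exact absurd rfl hx
              · exact (hI x a hx naa' m4).reachable
            exact (hr u hu hu0).trans (hr w hw hw0).symm
          · by_cases h4 : w0 = b'
            · subst h4
              have hr : ∀ x (hxS : x ∈ S4) (hx : x ≠ w0),
                  (G'.induce {z | z ≠ w0}).Reachable ⟨x, hx⟩ ⟨b, nbb'⟩ := by
                intro x hxS hx
                rw [hS4] at hxS
                simp only [Set.mem_insert_iff, Set.mem_singleton_iff] at hxS
                rcases hxS with rfl | rfl | rfl | rfl
                · exact (hI x b hx nbb' m1).reachable
                · exact Reachable.refl _
                · exact (hI x b hx nbb' (by rw [Sym2.eq_swap]; exact m2)).reachable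
                · exact absurd rfl hx
              exact (hr u hu hu0).trans (hr w hw hw0).symm
            · have haw : a ≠ w0 := fun h => h1 h.symm
              have hbw : b ≠ w0 := fun h => h2 h.symm
              have ha'w : a' ≠ w0 := fun h => h3 h.symm
              have hb'w : b' ≠ w0 := fun h => h4 h.symm
              have hr : ∀ x (hxS : x ∈ S4) (hx : x ≠ w0),
                  (G'.induce {z | z ≠ w0}).Reachable ⟨x, hx⟩ ⟨a, haw⟩ := by
                intro x hxS hx
                rw [hS4] at hxS
                simp only [Set.mem_insert_iff, Set.mem_singleton_iff] at hxS
                rcases hxS with rfl | rfl | rfl | rfl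
                · exact Reachable.refl _
                · exact (hI x a hx haw (by rw [Sym2.eq_swap]; exact m1)).reachable
                · exact ((hI x b' hx hb'w m3).reachable).trans
                    (hI b' a hb'w haw m4).reachable
                · exact (hI x a hx haw m4).reachable
              exact (hr u hu hu0).trans (hr w hw hw0).symm
  have hcomp : ComponentwiseBiconnected G' := by
    intro c
    refine SimpleGraph.ConnectedComponent.ind (fun v => ?_) c
    by_cases hv : v ∈ S4
    · have hclos : ∀ ⦃x y : V⦄, G'.Adj x y → x ∈ S4 → y ∈ S4 := fun x y h _ => hend h
      have hsupp : (G'.connectedComponentMk v).supp = S4 := by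
        ext w
        rw [ConnectedComponent.mem_supp_iff, ConnectedComponent.eq]
        constructor
        · intro h
          exact reach_closed hclos h.symm hv
        · intro hw
          exact (hra w hw).trans (hra v hv).symm
      rw [hsupp]
      refine ⟨⟨a, by rw [hS4]; simp⟩, hbs, ?_⟩
      intro T hsubT hT
      refine Set.Subset.antisymm (fun t ht => ?_) hsubT
      have hreach := (hT t ht a (hsubT (by rw [hS4]; simp))).1
      exact reach_closed hclos hreach.symm (by rw [hS4]; simp)
    · have hisol : ∀ y, ¬G'.Adj v y := fun y h => hv (hend h.symm)
      have hclos : ∀ ⦃x y : V⦄, G'.Adj x y → x ∈ ({v} : Set V) → y ∈ ({v} : Set V) := by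
        intro x y h hx
        rw [Set.mem_singleton_iff] at hx
        subst hx
        exact absurd h (hisol y)
      have hsupp : (G'.connectedComponentMk v).supp = {v} := by
        ext w
        rw [ConnectedComponent.mem_supp_iff, ConnectedComponent.eq]
        constructor
        · intro h
          exact reach_closed hclos h.symm rfl
        · intro hw
          rw [Set.mem_singleton_iff] at hw
          subst hw
          exact Reachable.refl _
      rw [hsupp]
      refine ⟨⟨v, rfl⟩, ?_, ?_⟩
      · intro x hx y hy
        rw [Set.mem_singleton_iff] at hx hy
        subst hx; subst hy
        exact ⟨Reachable.refl _, fun _ _ => Reachable.refl _, fun _ _ _ => Reachable.refl _⟩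
      · intro T hsubT hT
        refine Set.Subset.antisymm (fun t ht => ?_) hsubT
        have hreach := (hT t ht v (hsubT rfl)).1
        exact reach_closed hclos hreach.symm rfl
  have hbic : IsBiconnector G A B L3 := by
    constructor
    · intro e he
      rw [hL3] at he
      simp only [Set.mem_insert_iff, Set.mem_singleton_iff] at he
      have hnadj : ∀ x y : V, s(x, y) ≠ s(a, b) → ¬G.Adj x y := by
        intro x y hne h
        have hmem : s(x, y) ∈ G.edgeSet := G.mem_edgeSet.mpr h
        rw [hE, Set.mem_singleton_iff] at hmem
        exact hne hmem
      rcases he with rfl | rfl | rfl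
      · exact ⟨a', b, Sym2.eq_swap, ha'A, hbB, hnadj a' b (by simp [Sym2.eq_iff, nab, nba, naa', na'a, nab', nb'a, nba', na'b, nbb', nb'b, na'b', nb'a'])⟩
      · exact ⟨a', b', rfl, ha'A, hb'B, hnadj a' b' (by simp [Sym2.eq_iff, nab, nba, naa', na'a, nab', nb'a, nba', na'b, nbb', nb'b, na'b', nb'a'])⟩
      · exact ⟨a, b', Sym2.eq_swap, haA, hb'B, hnadj a b' (by simp [Sym2.eq_iff, nab, nba, naa', na'a, nab', nb'a, nba', na'b, nbb', nb'b, na'b', nb'a'])⟩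
    · rw [← hG']
      exact hcomp
  have hc3 : L3.ncard = 3 := by
    rw [hL3]
    exact Set.ncard_eq_three.mpr ⟨_, _, _, (by simp [Sym2.eq_iff, nab, nba, naa', na'a, nab', nb'a, nba', na'b, nbb', nb'b, na'b', nb'a']), (by simp [Sym2.eq_iff, nab, nba, naa', na'a, nab', nb'a, nba', na'b, nbb', nb'b, na'b', nb'a']), (by simp [Sym2.eq_iff, nab, nba, naa', na'a, nab', nb'a, nba', na'b, nbb', nb'b, na'b', nb'a']), rfl⟩
  have hmem3 : 3 ∈ {k | ∃ L, IsBiconnector G A B L ∧ L.ncard = k} := ⟨L3, hbic, hc3⟩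
  show sInf {k | ∃ L, IsBiconnector G A B L ∧ L.ncard = k} = 3
  refine le_antisymm (Nat.sInf_le hmem3) (le_csInf ⟨3, hmem3⟩ ?_)
  rintro k ⟨L, hLb, rfl⟩
  have hcb : ComponentwiseBiconnected (G ⊔ SimpleGraph.fromEdgeSet L) := hLb.2
  have hA2 : (G ⊔ SimpleGraph.fromEdgeSet L).Adj a b := by rw [sup_adj]; exact Or.inl hab
  have ha_in : a ∈ ((G ⊔ SimpleGraph.fromEdgeSet L).connectedComponentMk a).supp :=
    (ConnectedComponent.mem_supp_iff _ _).mpr rfl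
  have hb_in : b ∈ ((G ⊔ SimpleGraph.fromEdgeSet L).connectedComponentMk a).supp :=
    (ConnectedComponent.mem_supp_iff _ _).mpr (ConnectedComponent.sound hA2.symm.reachable)
  have hpair := (hcb _).2.1 a ha_in b hb_in
  have hreach := hpair.2.1 s(a, b) ((G ⊔ SimpleGraph.fromEdgeSet L).mem_edgeSet.mpr hA2)
  obtain ⟨p0⟩ := hreach
  have hGE : ∀ e ∈ ((G ⊔ SimpleGraph.fromEdgeSet L).deleteEdges {s(a, b)}).edgeSet, e ∈ L := by
    intro e he
    rw [edgeSet_deleteEdges] at he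
    obtain ⟨he1, he2⟩ := he
    rw [edgeSet_sup, hE] at he1
    rcases he1 with he1 | he1
    · exact absurd he1 he2
    · rw [edgeSet_fromEdgeSet] at he1
      exact he1.1
  have stepB : ∀ x y : V, s(x, y) ∈ L → x ∈ A → y ∈ B := by
    intro x y hxy hx
    obtain ⟨p, q', heq, hpA, hqB, -⟩ := hLb.1 _ hxy
    rcases Sym2.eq_iff.mp heq with ⟨rfl, rfl⟩ | ⟨rfl, rfl⟩
    · exact hqB
    · exact (hanB x hx hqB).elim
  have stepA : ∀ x y : V, s(x, y) ∈ L → x ∈ B → y ∈ A := by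
    intro x y hxy hx
    obtain ⟨p, q', heq, hpA, hqB, -⟩ := hLb.1 _ hxy
    rcases Sym2.eq_iff.mp heq with ⟨rfl, rfl⟩ | ⟨rfl, rfl⟩
    · exact (hanB x hpA hx).elim
    · exact hpA
  obtain ⟨q, hq, hqL⟩ :
      ∃ q : ((G ⊔ SimpleGraph.fromEdgeSet L).deleteEdges {s(a, b)}).Walk a b,
        q.IsPath ∧ ∀ e ∈ q.edges, e ∈ L :=
    ⟨p0.bypass, p0.bypass_isPath,
      fun e he => hGE e ((p0.bypass).edges_subset_edgeSet he)⟩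
  have hnodup := hq.isTrail.edges_nodup
  have hfinL : L.Finite := Set.toFinite L
  have hcard1 : q.edges.toFinset.card ≤ L.ncard := by
    rw [← Set.ncard_coe_finset]
    refine Set.ncard_le_ncard ?_ hfinL
    intro e he
    rw [Finset.mem_coe, List.mem_toFinset] at he
    exact hqL e he
  have hcard2 : q.edges.toFinset.card = q.edges.length := List.toFinset_card_of_nodup hnodup
  suffices h3 : 3 ≤ q.edges.length by omega
  clear hnodup hcard1 hcard2 hq
  cases q with
  | nil => exact absurd hab G.irrefl
  | cons h1 r =>
    rename_i x
    cases r with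
    | nil => exact ((SimpleGraph.deleteEdges_adj.mp h1).2 rfl).elim
    | cons h2 r2 =>
      rename_i y
      cases r2 with
      | nil =>
        have e1 : s(a, x) ∈ L := hqL _ (by simp)
        have e2 : s(x, b) ∈ L := hqL _ (by simp)
        have hxB : x ∈ B := stepB a x e1 haA
        have hxA : x ∈ A := stepA b x (by rw [Sym2.eq_swap]; exact e2) hbB
        exact (hanB x hxA hxB).elim
      | cons h3 r3 =>
        simp only [SimpleGraph.Walk.edges_cons, List.length_cons]
        omega


end
end AugBic
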